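/- With the hypotheses above (a_k ≤ 0, c_k ≤ 0, a_1 = c_n = 0, b_k = 1 - a_k - c_k, G > 0), the coefficients satisfy the bound |ψ²_k| ≤ G·k for all k, and hence |Ω²_k| ≤ G·Σ_{j=k}^{n} j ≤ G·n² for all k ∈ {1,...,n}. -/

import Mathlib

open Finset

/-- Bounds on the surface-gradient coefficients: |ψ²_k| ≤ G·k and
|Ω²_k| ≤ G·Σ_{j=k}^n j ≤ G·n². -/
theorem stmt_7 (n : ℕ) (hn : 1 ≤ n) (a b c e ψ2 Ω2 : ℕ → ℝ) (G : ℝ) (hG : 0 < G)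
    (ha1 : a 1 = 0) (hcn : c n = 0)
    (ha : ∀ k, 1 ≤ k → k ≤ n → a k ≤ 0)
    (hc : ∀ k, 1 ≤ k → k ≤ n → c k ≤ 0)
    (hb : ∀ k, 1 ≤ k → k ≤ n → b k = 1 - a k - c k)
    (he0 : e 0 = 0)
    (he : ∀ k, 1 ≤ k → k ≤ n → e k = -c k / (a k * e (k - 1) + b k))
    (hψ20 : ψ2 0 = 0)
    (hψ2 : ∀ k, 1 ≤ k → k ≤ n → ψ2 k = (-G - a k * ψ2 (k - 1)) / (a k * e (k - 1) + b k))
    (hΩ2top : Ω2 (n + 1) = 0)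
    (hΩ2 : ∀ k, 1 ≤ k → k ≤ n → Ω2 k = ψ2 k + e k * Ω2 (k + 1)) :
    (∀ k, 1 ≤ k → k ≤ n → |ψ2 k| ≤ G * k) ∧
    (∀ k, 1 ≤ k → k ≤ n →
      |Ω2 k| ≤ G * ∑ j ∈ Icc k n, (j : ℝ) ∧
      G * ∑ j ∈ Icc k n, (j : ℝ) ≤ G * (n : ℝ) ^ 2) := by
  -- main forward induction: 0 ≤ e k < 1 and |ψ2 k| ≤ G k (1 - e k)
  have key : ∀ k, k ≤ n → 0 ≤ e k ∧ e k < 1 ∧ |ψ2 k| ≤ G * k * (1 - e k) := by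
    intro k
    induction k with
    | zero =>
      intro _
      refine ⟨by rw [he0], by rw [he0]; norm_num, ?_⟩
      simp [hψ20]
    | succ k ih =>
      intro hk1
      have hk : k ≤ n := Nat.le_of_succ_le hk1
      obtain ⟨he_nonneg, he_lt, hψ⟩ := ih hk
      have hk1' : 1 ≤ k + 1 := Nat.succ_le_succ (Nat.zero_le k)
      have hA : 0 ≤ -(a (k+1)) := by linarith [ha (k+1) hk1' hk1]
      have hC : 0 ≤ -(c (k+1)) := by linarith [hc (k+1) hk1' hk1]
      have h1e : 0 ≤ 1 - e k := by linarith
      have hDform : a (k+1) * e ((k+1) - 1) + b (k+1)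
          = 1 + (-(c (k+1))) + (-(a (k+1))) * (1 - e k) := by
        rw [hb (k+1) hk1' hk1]
        simp only [Nat.add_sub_cancel]
        ring
      have hD1 : 1 ≤ a (k+1) * e ((k+1) - 1) + b (k+1) := by
        rw [hDform]
        nlinarith [mul_nonneg hA h1e]
      have hDpos : 0 < a (k+1) * e ((k+1) - 1) + b (k+1) := lt_of_lt_of_le one_pos hD1
      have heq : e (k+1) = -c (k+1) / (a (k+1) * e ((k+1) - 1) + b (k+1)) :=
        he (k+1) hk1' hk1
      have he1nonneg : 0 ≤ e (k+1) := by
        rw [heq]; exact div_nonneg hC hDpos.le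
      have he1lt : e (k+1) < 1 := by
        rw [heq, div_lt_one hDpos, hDform]
        nlinarith [mul_nonneg hA h1e]
      refine ⟨he1nonneg, he1lt, ?_⟩
      have hnum : |(-G - a (k+1) * ψ2 ((k+1) - 1))|
          ≤ G + (-(a (k+1))) * (G * k * (1 - e k)) := by
        simp only [Nat.add_sub_cancel]
        calc |(-G - a (k+1) * ψ2 k)| ≤ |(-G)| + |a (k+1) * ψ2 k| := abs_sub _ _
          _ = G + (-(a (k+1))) * |ψ2 k| := by
              rw [abs_neg, abs_of_pos hG, abs_mul, abs_of_nonpos (ha (k+1) hk1' hk1)]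
          _ ≤ G + (-(a (k+1))) * (G * k * (1 - e k)) := by
              have := mul_le_mul_of_nonneg_left hψ hA
              linarith
      rw [hψ2 (k+1) hk1' hk1, abs_div, abs_of_pos hDpos, div_le_iff₀ hDpos]
      have hmul : (1 - e (k+1)) * (a (k+1) * e ((k+1) - 1) + b (k+1))
          = (a (k+1) * e ((k+1) - 1) + b (k+1)) - (-(c (k+1))) := by
        rw [heq, sub_mul, div_mul_cancel₀ _ hDpos.ne']; ring
      have htarget : G * (↑(k+1)) * (1 - e (k+1)) * (a (k+1) * e ((k+1) - 1) + b (k+1))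
          = G * (↑(k+1)) * ((a (k+1) * e ((k+1) - 1) + b (k+1)) - (-(c (k+1)))) := by
        rw [mul_assoc (G * (↑(k+1))), hmul]
      rw [htarget, hDform]
      push_cast
      have hknn : (0:ℝ) ≤ (k:ℝ) := Nat.cast_nonneg k
      refine le_trans hnum ?_
      nlinarith [mul_nonneg (mul_nonneg hG.le hA) h1e, mul_nonneg hG.le hknn]
  have hψbound : ∀ k, 1 ≤ k → k ≤ n → |ψ2 k| ≤ G * k := by
    intro k h1 h2
    obtain ⟨h0, _, h3⟩ := key k h2
    have : G * k * (1 - e k) ≤ G * k := by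
      nlinarith [mul_nonneg hG.le (Nat.cast_nonneg (α := ℝ) k)]
    linarith
  have hsumnn : ∀ k : ℕ, (0:ℝ) ≤ ∑ j ∈ Icc k n, (j : ℝ) := by
    intro k
    exact Finset.sum_nonneg fun j _ => Nat.cast_nonneg j
  have hΩbound : ∀ d k, n + 1 - k ≤ d → 1 ≤ k → k ≤ n + 1 →
      |Ω2 k| ≤ G * ∑ j ∈ Icc k n, (j : ℝ) := by
    intro d
    induction d with
    | zero =>
      intro k hd h1 h2
      have hkeq : k = n + 1 := by omega
      subst hkeq
      rw [hΩ2top, Finset.Icc_eq_empty (by omega)]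
      simp
    | succ d ih =>
      intro k hd h1 h2
      by_cases hkeq : k = n + 1
      · subst hkeq
        rw [hΩ2top, Finset.Icc_eq_empty (by omega)]
        simp
      · have hkn : k ≤ n := by omega
        obtain ⟨he_nonneg, he_lt, _⟩ := key k hkn
        have hrec := ih (k+1) (by omega) (by omega) (by omega)
        rw [hΩ2 k h1 hkn]
        calc |ψ2 k + e k * Ω2 (k+1)| ≤ |ψ2 k| + |e k * Ω2 (k+1)| := abs_add_le _ _
          _ = |ψ2 k| + e k * |Ω2 (k+1)| := by rw [abs_mul, abs_of_nonneg he_nonneg]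
          _ ≤ G * k + 1 * (G * ∑ j ∈ Icc (k+1) n, (j : ℝ)) := by
              refine add_le_add (hψbound k h1 hkn) ?_
              exact mul_le_mul he_lt.le hrec (abs_nonneg _)
                (by linarith [mul_nonneg hG.le (hsumnn (k+1))])
          _ = G * ∑ j ∈ Icc k n, (j : ℝ) := by
              rw [Finset.Icc_add_one_left_eq_Ioc, Finset.Icc_eq_cons_Ioc hkn, Finset.sum_cons]
              ring
  refine ⟨hψbound, fun k h1 h2 => ⟨hΩbound (n + 1 - k) k le_rfl h1 (by omega), ?_⟩⟩
  have hsum : ∑ j ∈ Icc k n, (j : ℝ) ≤ (n:ℝ) ^ 2 := by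
    calc ∑ j ∈ Icc k n, (j : ℝ) ≤ ∑ _j ∈ Icc k n, (n : ℝ) := by
          refine Finset.sum_le_sum fun j hj => ?_
          exact_mod_cast (Finset.mem_Icc.mp hj).2
      _ = ((Icc k n).card : ℝ) * n := by rw [Finset.sum_const, nsmul_eq_mul]
      _ ≤ (n:ℝ) * n := by
          have : (Icc k n).card ≤ n := by rw [Nat.card_Icc]; omega
          have hn' : ((Icc k n).card : ℝ) ≤ (n:ℝ) := by exact_mod_cast this
          exact mul_le_mul_of_nonneg_right hn' (Nat.cast_nonneg n)
      _ = (n:ℝ) ^ 2 := by ring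
  exact mul_le_mul_of_nonneg_left hsum hG.le
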